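/- Let S_2(ℤ) be the ring of matrices [[a,b],[0,a]] with a,b ∈ ℤ, and let σ₃ : S_2(ℤ) → S_2(ℤ) be the ring endomorphism sending [[a,b],[0,a]] to [[a,0],[0,a]]. Then S_2(ℤ) is weak σ₃-compatible (i.e., for all A, B ∈ S_2(ℤ), A·σ₃(B) is nilpotent if and only if A·B is nilpotent), but S_2(ℤ) is not σ₃-compatible: there exist C, D ∈ S_2(ℤ) with C·σ₃(D) = 0 and C·D ≠ 0. -/

import Mathlib

open TrivSqZeroExt

/-- The endomorphism `σ₃` of `S₂(ℤ) = TrivSqZeroExt ℤ ℤ` sending `[[a,b],[0,a]]` to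
`[[a,0],[0,a]]`. -/
def sigma3 : TrivSqZeroExt ℤ ℤ →+* TrivSqZeroExt ℤ ℤ where
  toFun x := inl x.fst
  map_one' := by simp
  map_mul' x y := by simp [fst_mul, inl_mul]
  map_zero' := by simp
  map_add' x y := by simp [fst_add, inl_add]

lemma nilp_iff (x : TrivSqZeroExt ℤ ℤ) : IsNilpotent x ↔ x.fst = 0 := by
  constructor
  · rintro ⟨n, hn⟩
    have : x.fst ^ n = 0 := by
      have := congrArg TrivSqZeroExt.fst hn
      simpa [fst_pow] using this
    exact (pow_eq_zero_iff'.mp this).1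
  · intro h
    refine ⟨2, ?_⟩
    ext
    · simp [fst_pow, h]
    · simp [sq, snd_mul, h]

theorem S2Z_weak_compatible_not_compatible :
    (∀ A B : TrivSqZeroExt ℤ ℤ, IsNilpotent (A * sigma3 B) ↔ IsNilpotent (A * B)) ∧
    (∃ C D : TrivSqZeroExt ℤ ℤ, C * sigma3 D = 0 ∧ C * D ≠ 0) := by
  constructor
  · intro A B
    rw [nilp_iff, nilp_iff]
    simp [fst_mul, show ∀ x, sigma3 x = inl x.fst from fun _ => rfl]
  · refine ⟨1, inr 1, ?_, ?_⟩
    · simp [show ∀ x, sigma3 x = inl x.fst from fun _ => rfl]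
    · intro h
      have := congrArg TrivSqZeroExt.snd h
      simp at this
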